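/- Let H ∈ (0, 1/2) and α > 0, and define c(t) := ∫_{−∞}^{∞} cos(tx)·|x|^{1−2H}/(α² + x²) dx for t ∈ ℝ. Then there exists a constant C > 0 such that |c(t)| ≤ C·|t|^{2H−2} for all t with |t| ≥ 1. -/

import Mathlib

open Real MeasureTheory Set

noncomputable section
namespace FOUaux

variable (H α : ℝ)

def f (x : ℝ) : ℝ := |x| ^ (1 - 2*H) / (α ^ 2 + x ^ 2)

def g1 (u : ℝ) : ℝ :=
  (1 - 2*H) * u ^ (-(2*H)) * (α^2 + u^2)⁻¹ + u ^ (1 - 2*H) * (-(2*u) / (α^2 + u^2) ^ 2)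

def g2 (u : ℝ) : ℝ :=
  u ^ (-1 - 2*H) *
    ((1 - 2*H) * (-(2*H)) / (α^2 + u^2) + (-4*(1 - 2*H)) * u^2 / (α^2 + u^2)^2
      + (-2*u^2*(α^2 + u^2) + 8*u^4) / (α^2 + u^2)^3)

variable {H α}

lemma denom_pos (hα : 0 < α) (x : ℝ) : 0 < α ^ 2 + x ^ 2 := by positivity

lemma hasDerivAt_f (hα : 0 < α) {u : ℝ} (hu : 0 < u) :
    HasDerivAt (f H α) (g1 H α u) u := by
  have hq : HasDerivAt (fun y : ℝ => α ^ 2 + y ^ 2) (2 * u) u := by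
    simpa using ((hasDerivAt_pow 2 u).const_add (α ^ 2))
  have hqi : HasDerivAt (fun y : ℝ => (α ^ 2 + y ^ 2)⁻¹)
      (-(2 * u) / (α ^ 2 + u ^ 2) ^ 2) u := hq.inv (denom_pos hα u).ne'
  have hp : HasDerivAt (fun y : ℝ => y ^ (1 - 2*H)) ((1 - 2*H) * u ^ (1 - 2*H - 1)) u :=
    Real.hasDerivAt_rpow_const (Or.inl hu.ne')
  have h1 : HasDerivAt (fun y : ℝ => y ^ (1 - 2*H) * (α ^ 2 + y ^ 2)⁻¹)
      ((1 - 2*H) * u ^ (1 - 2*H - 1) * (α ^ 2 + u ^ 2)⁻¹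
        + u ^ (1 - 2*H) * (-(2 * u) / (α ^ 2 + u ^ 2) ^ 2)) u := hp.mul hqi
  have h2 : (fun y : ℝ => y ^ (1 - 2*H) * (α ^ 2 + y ^ 2)⁻¹) =ᶠ[nhds u] f H α := by
    filter_upwards [Ioi_mem_nhds hu] with y hy
    simp [f, abs_of_pos (show (0:ℝ) < y from hy), div_eq_mul_inv]
  have := h1.congr_of_eventuallyEq h2.symm
  convert this using 1
  · rfl
  · rfl
  rw [g1, show 1 - 2*H - 1 = -(2*H) by ring]

lemma hasDerivAt_g1 (hα : 0 < α) {u : ℝ} (hu : 0 < u) :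
    HasDerivAt (g1 H α) (g2 H α u) u := by
  have hs : (0:ℝ) < α ^ 2 + u ^ 2 := denom_pos hα u
  have hq : HasDerivAt (fun y : ℝ => α ^ 2 + y ^ 2) (2 * u) u := by
    simpa using ((hasDerivAt_pow 2 u).const_add (α ^ 2))
  have hqi : HasDerivAt (fun y : ℝ => (α ^ 2 + y ^ 2)⁻¹)
      (-(2 * u) / (α ^ 2 + u ^ 2) ^ 2) u := hq.inv hs.ne'
  have hA : HasDerivAt (fun y : ℝ => (1 - 2*H) * y ^ (-(2*H)) * (α ^ 2 + y ^ 2)⁻¹)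
      (((1 - 2*H) * (-(2*H) * u ^ (-(2*H) - 1))) * (α ^ 2 + u ^ 2)⁻¹
        + ((1 - 2*H) * u ^ (-(2*H))) * (-(2 * u) / (α ^ 2 + u ^ 2) ^ 2)) u := by
    exact ((Real.hasDerivAt_rpow_const (p := -(2*H)) (Or.inl hu.ne')).const_mul
      (1 - 2*H)).mul hqi
  have hq2 : HasDerivAt (fun y : ℝ => ((α ^ 2 + y ^ 2) ^ 2 : ℝ))
      (2 * (α ^ 2 + u ^ 2) * (2 * u)) u := by
    simpa [mul_comm, mul_assoc, mul_left_comm] using hq.fun_pow 2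
  have hq2i : HasDerivAt (fun y : ℝ => (((α ^ 2 + y ^ 2) ^ 2 : ℝ))⁻¹)
      (-(2 * (α ^ 2 + u ^ 2) * (2 * u)) / ((α ^ 2 + u ^ 2) ^ 2) ^ 2) u :=
    hq2.inv (by positivity)
  have hlin : HasDerivAt (fun y : ℝ => -(2*y)) (-2 : ℝ) u := by
    simpa using ((hasDerivAt_id u).const_mul (2:ℝ)).fun_neg
  have hR : HasDerivAt (fun y : ℝ => -(2*y) * (((α ^ 2 + y ^ 2) ^ 2 : ℝ))⁻¹)
      ((-2) * ((α ^ 2 + u ^ 2) ^ 2)⁻¹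
        + (-(2*u)) * (-(2 * (α ^ 2 + u ^ 2) * (2 * u)) / ((α ^ 2 + u ^ 2) ^ 2) ^ 2)) u :=
    hlin.mul hq2i
  have hB : HasDerivAt (fun y : ℝ => y ^ (1 - 2*H) * (-(2*y) * (((α ^ 2 + y ^ 2) ^ 2 : ℝ))⁻¹))
      (((1 - 2*H) * u ^ (1 - 2*H - 1)) * (-(2*u) * ((α ^ 2 + u ^ 2) ^ 2)⁻¹)
        + u ^ (1 - 2*H) * ((-2) * ((α ^ 2 + u ^ 2) ^ 2)⁻¹
          + (-(2*u)) * (-(2 * (α ^ 2 + u ^ 2) * (2 * u)) / ((α ^ 2 + u ^ 2) ^ 2) ^ 2))) u :=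
    (Real.hasDerivAt_rpow_const (p := 1 - 2*H) (Or.inl hu.ne')).mul hR
  have hsum := hA.fun_add hB
  have heq : (fun y : ℝ => (1 - 2*H) * y ^ (-(2*H)) * (α ^ 2 + y ^ 2)⁻¹
      + y ^ (1 - 2*H) * (-(2*y) * (((α ^ 2 + y ^ 2) ^ 2 : ℝ))⁻¹)) = g1 H α := by
    funext y
    rw [g1, div_eq_mul_inv]
  rw [heq] at hsum
  convert hsum using 1
  · rfl
  · rfl
  have e1 : u ^ (-(2*H) - 1) = u ^ (-1 - 2*H) := by rw [show -(2*H) - 1 = -1 - 2*H by ring]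
  have e2 : u ^ (-(2*H)) = u ^ (-1 - 2*H) * u := by
    rw [show -(2*H) = (-1 - 2*H) + 1 by ring, Real.rpow_add hu, Real.rpow_one]
  have e3 : u ^ (1 - 2*H) = u ^ (-1 - 2*H) * u ^ 2 := by
    rw [show (1 - 2*H) = (-1 - 2*H) + 2 by ring, Real.rpow_add hu]
    norm_num [Real.rpow_natCast]
  have e4 : u ^ (1 - 2*H - 1) = u ^ (-1 - 2*H) * u := by
    rw [show 1 - 2*H - 1 = -(2*H) by ring]; exact e2
  rw [g2, e1, e2, e3, e4]
  field_simp
  ring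

lemma g2_bound (hH : H ∈ Set.Ioo (0:ℝ) (1/2)) (hα : 0 < α) {u : ℝ} (hu : 0 < u) :
    |g2 H α u| ≤ 16 / α^2 * u ^ (-1 - 2*H) := by
  obtain ⟨hH0, hH1⟩ := hH
  have hs : (0:ℝ) < α ^ 2 + u ^ 2 := denom_pos hα u
  have hup : (0:ℝ) < u ^ (-1 - 2*H) := Real.rpow_pos_of_pos hu _
  rw [g2, abs_mul, abs_of_pos hup]
  rw [mul_comm (16 / α^2)]
  refine mul_le_mul_of_nonneg_left ?_ hup.le
  rw [abs_le]
  have h1 : u^2 ≤ α^2 + u^2 := by nlinarith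
  have h2 : α^2 ≤ α^2 + u^2 := by nlinarith
  have ha2 : (0:ℝ) < α^2 := by positivity
  set s : ℝ := α^2 + u^2 with hsdef
  have hEeq : (1 - 2*H) * (-(2*H)) / s + (-4*(1 - 2*H)) * u^2 / s^2
      + (-2*u^2*s + 8*u^4) / s^3
      = ((1 - 2*H) * (-(2*H)) * s^2 + (-4*(1 - 2*H)) * u^2 * s
          + (-2*u^2*s + 8*u^4)) / s^3 := by
    field_simp
  rw [hEeq]
  have hs3 : (0:ℝ) < s^3 := by positivity
  have hu4 : u^4 ≤ s^2 := by nlinarith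
  have hss : α^2 * s^2 ≤ s^3 := by nlinarith
  have e2 : (0:ℝ) ≤ 1 - 2*H := by linarith
  have e1 : (1-2*H) * (-(2*H)) ≤ 0 := by nlinarith
  have l1 : (1-2*H) * (2*H) ≤ 1 := by nlinarith
  have hu2s : u^2 * s ≤ s^2 := by nlinarith
  constructor
  · rw [show -(16/α^2) = (-16)/α^2 by ring, div_le_div_iff₀ ha2 hs3]
    nlinarith [mul_nonneg e2 (sq_nonneg u), mul_nonneg (mul_nonneg e2 (sq_nonneg u)) hs.le,
      mul_le_mul_of_nonneg_left hu2s (by linarith : (0:ℝ) ≤ 4*(1-2*H)),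
      mul_le_mul_of_nonneg_left (mul_le_mul_of_nonneg_right l1 (sq_nonneg s)) ha2.le,
      mul_le_mul_of_nonneg_left hss (by norm_num : (0:ℝ) ≤ 16), sq_nonneg s, mul_pos hs3 ha2]
  · rw [div_le_div_iff₀ hs3 ha2]
    nlinarith [mul_le_mul_of_nonneg_left hu4 ha2.le,
      mul_nonneg (mul_nonneg e2 (sq_nonneg u)) hs.le,
      mul_le_mul_of_nonneg_left hss (by norm_num : (0:ℝ) ≤ 8),
      mul_nonneg (mul_nonneg ha2.le (sq_nonneg u)) hs.le,
      mul_le_mul_of_nonneg_left (mul_le_mul_of_nonneg_right e1 (sq_nonneg s)) ha2.le]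

lemma f_cont (hH : H ∈ Set.Ioo (0:ℝ) (1/2)) (hα : 0 < α) : Continuous (f H α) := by
  apply Continuous.div
  · exact continuous_abs.rpow_const (fun x => Or.inr (by linarith [hH.2]))
  · exact continuous_const.add (continuous_pow 2)
  · exact fun x => (denom_pos hα x).ne'

lemma f_nonneg (hα : 0 < α) (x : ℝ) : 0 ≤ f H α x := by
  apply div_nonneg (Real.rpow_nonneg (abs_nonneg x) _) (denom_pos hα x).le

lemma f_even (x : ℝ) : f H α (-x) = f H α x := by
  simp [f]

lemma f_le_tail (hα : 0 < α) {x : ℝ} (hx : 0 < x) : f H α x ≤ x ^ (-1 - 2*H) := by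
  rw [f, abs_of_pos hx]
  have h1 : x ^ (1 - 2*H) / (α^2 + x^2) ≤ x ^ (1 - 2*H) / x^2 :=
    div_le_div_of_nonneg_left (Real.rpow_nonneg hx.le _) (by positivity) (by nlinarith)
  refine h1.trans_eq ?_
  rw [← Real.rpow_natCast x 2, ← Real.rpow_sub hx]
  congr 1
  push_cast
  ring

lemma f_le_abs (hα : 0 < α) (x : ℝ) : f H α x ≤ |x| ^ (1 - 2*H) / α^2 :=
  div_le_div_of_nonneg_left (Real.rpow_nonneg (abs_nonneg x) _) (by positivity) (by nlinarith)

lemma f_integrable (hH : H ∈ Set.Ioo (0:ℝ) (1/2)) (hα : 0 < α) :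
    Integrable (f H α) := by
  obtain ⟨hH0, hH1⟩ := hH
  have hcont := f_cont ⟨hH0, hH1⟩ hα
  have htail : IntegrableOn (f H α) (Ioi 1) := by
    refine Integrable.mono (integrableOn_Ioi_rpow_of_lt (show -1-2*H < -1 by linarith) one_pos)
      hcont.aestronglyMeasurable.restrict ?_
    rw [ae_restrict_iff' measurableSet_Ioi]
    filter_upwards with x hx
    have hx0 : (0:ℝ) < x := lt_trans one_pos hx
    rw [Real.norm_eq_abs, Real.norm_eq_abs, abs_of_nonneg (f_nonneg hα x),
      abs_of_pos (Real.rpow_pos_of_pos hx0 _)]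
    exact f_le_tail hα hx0
  have hmid : IntegrableOn (f H α) (Icc (-1) 1) := hcont.integrableOn_Icc
  have hneg : IntegrableOn (f H α) (Iic (-1)) := by
    rw [← Measure.map_neg_eq_self (volume : Measure ℝ)]
    have m : MeasurableEmbedding fun x : ℝ => -x :=
      (Homeomorph.neg ℝ).measurableEmbedding
    rw [m.integrableOn_map_iff]
    have : (f H α) ∘ (fun x : ℝ => -x) = f H α := by
      funext x; simp [Function.comp, f_even]
    rw [this]
    have : (fun x : ℝ => -x) ⁻¹' (Iic (-1)) = Ici 1 := by
      ext x; simp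
    rw [this]
    exact Iff.mpr integrableOn_Ici_iff_integrableOn_Ioi htail
  have : (univ : Set ℝ) ⊆ Iic (-1) ∪ (Icc (-1) 1 ∪ Ioi 1) := by
    intro x _
    rcases le_or_gt x (-1) with h | h
    · exact Or.inl h
    · rcases le_or_gt x 1 with h2 | h2
      · exact Or.inr (Or.inl ⟨h.le, h2⟩)
      · exact Or.inr (Or.inr h2)
  rw [← integrableOn_univ]
  exact IntegrableOn.mono_set (hneg.union (hmid.union htail)) this

lemma key_bound (hH : H ∈ Set.Ioo (0:ℝ) (1/2)) (hα : 0 < α) {h x : ℝ}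
    (hh : 0 < h) (hx : 2*h ≤ x) :
    |f H α (x+h) - 2 * f H α x + f H α (x-h)| ≤
      16/α^2 * (x-h) ^ (-1 - 2*H) * h^2 := by
  have hxh : 0 < x - h := by linarith
  set K : ℝ := 16/α^2 * (x-h) ^ (-1 - 2*H) with hK
  have hK0 : 0 ≤ K := by positivity
  have inner : ∀ y ∈ Icc (x-h) x, ‖g1 H α (y+h) - g1 H α y‖ ≤ K * h := by
    intro y hy
    have hy0 : 0 < y := lt_of_lt_of_le hxh hy.1
    have h1 : ∀ z ∈ Icc y (y+h), HasDerivWithinAt (g1 H α) (g2 H α z) (Icc y (y+h)) z :=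
      fun z hz => (hasDerivAt_g1 hα (lt_of_lt_of_le hy0 hz.1)).hasDerivWithinAt
    have h2 : ∀ z ∈ Icc y (y+h), ‖g2 H α z‖ ≤ K := by
      intro z hz
      have hz0 : 0 < z := lt_of_lt_of_le hy0 hz.1
      refine (g2_bound hH hα hz0).trans ?_
      rw [hK]
      refine mul_le_mul_of_nonneg_left ?_ (by positivity)
      exact Real.rpow_le_rpow_of_nonpos hxh (le_trans hy.1 hz.1) (by linarith [hH.1])
    have := (convex_Icc y (y+h)).norm_image_sub_le_of_norm_hasDerivWithin_le h1 h2
      (left_mem_Icc.2 (by linarith)) (right_mem_Icc.2 (by linarith))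
    calc ‖g1 H α (y+h) - g1 H α y‖ ≤ K * ‖(y+h) - y‖ := this
      _ = K * h := by rw [add_sub_cancel_left, Real.norm_eq_abs, abs_of_pos hh]
  have houter : ∀ y ∈ Icc (x-h) x,
      HasDerivWithinAt (fun y => f H α (y+h) - f H α y)
        (g1 H α (y+h) - g1 H α y) (Icc (x-h) x) y := by
    intro y hy
    have hy0 : 0 < y := lt_of_lt_of_le hxh hy.1
    have d1 : HasDerivAt (fun y => f H α (y+h)) (g1 H α (y+h)) y := by
      simpa [Function.comp_def] using (hasDerivAt_f hα (show 0 < y + h by linarith)).comp y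
        ((hasDerivAt_id y).add_const h)
    exact ((d1.sub (hasDerivAt_f hα hy0)).hasDerivWithinAt)
  have main := (convex_Icc (x-h) x).norm_image_sub_le_of_norm_hasDerivWithin_le houter inner
    (left_mem_Icc.2 (by linarith)) (right_mem_Icc.2 (by linarith))
  have heq : (f H α (x+h) - f H α x) - (f H α (x-h+h) - f H α (x-h))
      = f H α (x+h) - 2 * f H α x + f H α (x-h) := by
    rw [sub_add_cancel]
    ring
  rw [heq] at main
  calc |f H α (x+h) - 2 * f H α x + f H α (x-h)| ≤ K * h * ‖x - (x-h)‖ := main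
    _ = 16/α^2 * (x-h) ^ (-1 - 2*H) * h^2 := by
        rw [hK, Real.norm_eq_abs, show x - (x-h) = h by ring, abs_of_pos hh]
        ring

end FOUaux

end

set_option maxHeartbeats 1000000 in
/-- For `H ∈ (0,1/2)`, `α > 0` and `c(t) := ∫ cos(tx) |x|^{1-2H}/(α²+x²) dx`, there is `C > 0`
with `|c(t)| ≤ C |t|^{2H-2}` for all `|t| ≥ 1`. -/
theorem stmt_2 (H α : ℝ) (hH : H ∈ Set.Ioo (0 : ℝ) (1/2)) (hα : 0 < α)
    (c : ℝ → ℝ)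
    (hc : ∀ t : ℝ, c t = ∫ x : ℝ, Real.cos (t * x) * (|x| ^ (1 - 2*H) / (α ^ 2 + x ^ 2))) :
    ∃ C > 0, ∀ t : ℝ, 1 ≤ |t| → |c t| ≤ C * |t| ^ (2*H - 2) := by
  obtain ⟨hH0, hH1⟩ := hH
  have hc' : ∀ t, c t = ∫ x : ℝ, Real.cos (t*x) * FOUaux.f H α x := by
    intro t
    rw [hc t]
    rfl
  set fn := FOUaux.f H α with hfn
  have hfint : Integrable fn := FOUaux.f_integrable ⟨hH0, hH1⟩ hα
  have hfcont : Continuous fn := FOUaux.f_cont ⟨hH0, hH1⟩ hα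
  have hCpos : (0:ℝ) < (12/α^2 + 4/(H*α^2)) * π^2 := by
    apply mul_pos
    · apply add_pos (by positivity) (div_pos (by norm_num) (mul_pos hH0 (by positivity)))
    · exact pow_pos Real.pi_pos 2
  refine ⟨(12/α^2 + 4/(H*α^2)) * π^2, hCpos, ?_⟩
  intro t ht
  have hcev : ∀ u, c (-u) = c u := by
    intro u
    rw [hc', hc']
    simp only [neg_mul, Real.cos_neg]
  have hct : c t = c |t| := by
    rcases abs_choice t with h1 | h1
    · rw [h1]
    · rw [h1, hcev]
  rw [hct]
  set s := |t| with hs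
  have hs1 : (1:ℝ) ≤ s := ht
  have hs0 : (0:ℝ) < s := lt_of_lt_of_le one_pos hs1
  set h := π / s with hh'
  have hh : 0 < h := div_pos Real.pi_pos hs0
  have hsh : s * h = π := by rw [hh']; field_simp
  have hi1 : Integrable (fun x => fn (x + h)) := hfint.comp_add_right h
  have hi2 : Integrable (fun x => fn (x - h)) := hfint.comp_sub_right h
  set Δ : ℝ → ℝ := fun x => fn (x+h) - 2 * fn x + fn (x-h) with hΔdef
  have hΔint : Integrable Δ := (hi1.sub (hfint.const_mul 2)).add hi2
  have hΔcont : Continuous Δ := by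
    exact ((hfcont.comp (continuous_id.add continuous_const)).sub
      (continuous_const.mul hfcont)).add (hfcont.comp (continuous_id.sub continuous_const))
  have hbdd : ∀ (g : ℝ → ℝ), Integrable g → Integrable (fun x => Real.cos (s*x) * g x) := by
    intro g hg
    exact hg.bdd_mul ((Real.continuous_cos.comp (continuous_const.mul continuous_id)).aestronglyMeasurable)
      (c := 1) (ae_of_all _ fun x => by simpa [Real.norm_eq_abs] using Real.abs_cos_le_one (s*x))
  have hplus : ∫ x : ℝ, Real.cos (s*x) * fn (x+h) = - c s := by
    have e : ∀ x : ℝ, Real.cos (s*x) * fn (x+h) = (fun y => Real.cos (s*y - π) * fn y) (x + h) := by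
      intro x
      simp only
      rw [show s*(x+h) - π = s*x by rw [mul_add, hsh]; ring]
    calc ∫ x : ℝ, Real.cos (s*x) * fn (x+h)
        = ∫ x : ℝ, (fun y => Real.cos (s*y - π) * fn y) (x+h) := by simp only [e]
      _ = ∫ y : ℝ, Real.cos (s*y - π) * fn y :=
          integral_add_right_eq_self (μ := volume) (fun y => Real.cos (s*y - π) * fn y) h
      _ = ∫ y : ℝ, -(Real.cos (s*y) * fn y) := by simp only [Real.cos_sub_pi, neg_mul]
      _ = - c s := by rw [integral_neg, hc']
  have hminus : ∫ x : ℝ, Real.cos (s*x) * fn (x-h) = - c s := by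
    have e : ∀ x : ℝ, Real.cos (s*x) * fn (x-h) = (fun y => Real.cos (s*y + π) * fn y) (x - h) := by
      intro x
      simp only
      rw [show s*(x-h) + π = s*x by rw [mul_sub, hsh]; ring]
    calc ∫ x : ℝ, Real.cos (s*x) * fn (x-h)
        = ∫ x : ℝ, (fun y => Real.cos (s*y + π) * fn y) (x-h) := by simp only [e]
      _ = ∫ y : ℝ, Real.cos (s*y + π) * fn y :=
          integral_sub_right_eq_self (μ := volume) (fun y => Real.cos (s*y + π) * fn y) h
      _ = ∫ y : ℝ, -(Real.cos (s*y) * fn y) := by simp only [Real.cos_add_pi, neg_mul]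
      _ = - c s := by rw [integral_neg, hc']
  have hmid0 : ∫ x : ℝ, Real.cos (s*x) * fn x = c s := (hc' s).symm
  have hsplit : ∫ x : ℝ, Real.cos (s*x) * Δ x = -(4 * c s) := by
    have e : (fun x => Real.cos (s*x) * Δ x)
        = fun x => (Real.cos (s*x) * fn (x+h) - 2*(Real.cos (s*x) * fn x))
            + Real.cos (s*x) * fn (x-h) := by
      funext x
      simp only [hΔdef]
      ring
    have iA : Integrable (fun x => Real.cos (s*x) * fn (x+h) - 2*(Real.cos (s*x) * fn x)) volume :=
      (hbdd _ hi1).sub ((hbdd _ hfint).const_mul 2)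
    have iB : Integrable (fun x => Real.cos (s*x) * fn (x-h)) volume := hbdd _ hi2
    have i1 : Integrable (fun x => Real.cos (s*x) * fn (x+h)) volume := hbdd _ hi1
    have i2 : Integrable (fun x => 2*(Real.cos (s*x) * fn x)) volume :=
      (hbdd _ hfint).const_mul 2
    rw [e, integral_add iA iB, integral_sub i1 i2, integral_const_mul,
      hplus, hminus, hmid0]
    ring
  have step2 : 4 * |c s| ≤ ∫ x : ℝ, |Δ x| := by
    have h1 : |∫ x : ℝ, Real.cos (s*x) * Δ x| = 4 * |c s| := by
      rw [hsplit, abs_neg, abs_mul]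
      norm_num
    rw [← h1]
    calc |∫ x : ℝ, Real.cos (s*x) * Δ x| = ‖∫ x : ℝ, Real.cos (s*x) * Δ x‖ :=
        (Real.norm_eq_abs _).symm
      _ ≤ ∫ x : ℝ, ‖Real.cos (s*x) * Δ x‖ := norm_integral_le_integral_norm _
      _ ≤ ∫ x : ℝ, |Δ x| := by
          refine integral_mono (hbdd Δ hΔint).norm hΔint.abs (fun x => ?_)
          rw [norm_mul, Real.norm_eq_abs, Real.norm_eq_abs]
          calc |Real.cos (s*x)| * |Δ x| ≤ 1 * |Δ x| :=
            mul_le_mul_of_nonneg_right (Real.abs_cos_le_one _) (abs_nonneg _)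
          _ = |Δ x| := one_mul _
  have hΔabs_even : ∀ x, |Δ (-x)| = |Δ x| := by
    intro x
    have e1 : -x + h = -(x - h) := by ring
    have e2 : -x - h = -(x + h) := by ring
    simp only [hΔdef, e1, e2, hfn, FOUaux.f_even]
    apply congrArg
    ring
  have hIic : ∫ x in Iic (0:ℝ), |Δ x| = ∫ x in Ioi (0:ℝ), |Δ x| := by
    calc ∫ x in Iic (0:ℝ), |Δ x| = ∫ x in Iic (0:ℝ), |Δ (-x)| := by simp_rw [hΔabs_even]
      _ = ∫ x in Ioi (-(0:ℝ)), |Δ x| := integral_comp_neg_Iic 0 (fun y => |Δ y|)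
      _ = ∫ x in Ioi (0:ℝ), |Δ x| := by rw [neg_zero]
  have hJ : ∫ x : ℝ, |Δ x| = 2 * ∫ x in Ioi (0:ℝ), |Δ x| := by
    rw [← integral_add_compl measurableSet_Iic hΔint.abs, compl_Iic, hIic]
    ring
  have hsplit3 : ∫ x in Ioi (0:ℝ), |Δ x|
      = (∫ x in Ioc (0:ℝ) (2*h), |Δ x|) + ∫ x in Ioi (2*h), |Δ x| := by
    rw [← Ioc_union_Ioi_eq_Ioi (show (0:ℝ) ≤ 2*h by linarith),
      setIntegral_union (Ioc_disjoint_Ioi le_rfl) measurableSet_Ioi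
        hΔint.abs.integrableOn hΔint.abs.integrableOn]
  have hmid : ∫ x in Ioc (0:ℝ) (2*h), |Δ x| ≤ (4 * (3*h)^(1-2*H) / α^2) * (2*h) := by
    have hb : ∀ᵐ x ∂(volume : Measure ℝ), x ∈ Ioc (0:ℝ) (2*h) → ‖|Δ x|‖ ≤ 4 * (3*h)^(1-2*H) / α^2 := by
      refine Filter.Eventually.of_forall (fun x hx => ?_)
      obtain ⟨hx1, hx2⟩ := hx
      rw [Real.norm_eq_abs, abs_abs]
      have hfb : ∀ y : ℝ, |y| ≤ 3*h → fn y ≤ (3*h)^(1-2*H) / α^2 := by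
        intro y hy
        refine (FOUaux.f_le_abs hα y).trans ?_
        have := Real.rpow_le_rpow (abs_nonneg y) hy (show (0:ℝ) ≤ 1-2*H by linarith)
        exact div_le_div_of_nonneg_right this (by positivity) |>.trans_eq rfl
      have b1 : fn (x+h) ≤ (3*h)^(1-2*H) / α^2 := hfb _ (abs_le.2 ⟨by linarith, by linarith⟩)
      have b2 : fn x ≤ (3*h)^(1-2*H) / α^2 := hfb _ (abs_le.2 ⟨by linarith, by linarith⟩)
      have b3 : fn (x-h) ≤ (3*h)^(1-2*H) / α^2 := hfb _ (abs_le.2 ⟨by linarith, by linarith⟩)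
      have n1 : 0 ≤ fn (x+h) := FOUaux.f_nonneg hα _
      have n2 : 0 ≤ fn x := FOUaux.f_nonneg hα _
      have n3 : 0 ≤ fn (x-h) := FOUaux.f_nonneg hα _
      have habs : |Δ x| ≤ fn (x+h) + 2 * fn x + fn (x-h) := by
        simp only [hΔdef]
        rw [abs_le]
        constructor <;> nlinarith
      calc |Δ x| ≤ fn (x+h) + 2 * fn x + fn (x-h) := habs
        _ ≤ (3*h)^(1-2*H)/α^2 + 2*((3*h)^(1-2*H)/α^2) + (3*h)^(1-2*H)/α^2 :=
            add_le_add (add_le_add b1 (by linarith)) b3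
        _ = 4 * (3*h)^(1-2*H) / α^2 := by ring
    have hmeas : AEStronglyMeasurable (fun x => |Δ x|) ((volume : Measure ℝ).restrict (Ioc 0 (2*h))) :=
      hΔcont.abs.aestronglyMeasurable.restrict
    have hfin : (volume : Measure ℝ) (Ioc (0:ℝ) (2*h)) < ⊤ := by
      rw [Real.volume_Ioc]
      exact ENNReal.ofReal_lt_top
    have := norm_setIntegral_le_of_norm_le_const_ae' hfin hb
    calc ∫ x in Ioc (0:ℝ) (2*h), |Δ x| ≤ ‖∫ x in Ioc (0:ℝ) (2*h), |Δ x|‖ := le_abs_self _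
      _ ≤ 4 * (3*h)^(1-2*H) / α^2 * ((volume : Measure ℝ) (Ioc (0:ℝ) (2*h))).toReal := this
      _ = (4 * (3*h)^(1-2*H) / α^2) * (2*h) := by
          rw [Real.volume_Ioc, ENNReal.toReal_ofReal (by linarith)]
          ring_nf
  -- tail
  have hmp : MeasurePreserving (fun x : ℝ => x + h) volume volume :=
    measurePreserving_add_right volume h
  have hemb : MeasurableEmbedding (fun x : ℝ => x + h) :=
    (Homeomorph.addRight h).measurableEmbedding
  have hpre : (fun x : ℝ => x + h) ⁻¹' (Ioi (2*h)) = Ioi h := by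
    ext x
    simp only [mem_preimage, mem_Ioi]
    constructor <;> intro hx <;> linarith
  have base : IntegrableOn (fun x : ℝ => x ^ (-1-2*H)) (Ioi h) :=
    integrableOn_Ioi_rpow_of_lt (by linarith) hh
  have hint_tail : IntegrableOn (fun y : ℝ => (y - h) ^ (-1-2*H)) (Ioi (2*h)) := by
    have : IntegrableOn (fun y : ℝ => (y - h)^(-1-2*H)) (Ioi (2*h))
        (Measure.map (fun x => x + h) volume) := by
      rw [hemb.integrableOn_map_iff, hpre]
      have hcomp : ((fun y : ℝ => (y - h) ^ (-1-2*H)) ∘ fun x : ℝ => x + h)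
          = fun x : ℝ => x ^ (-1-2*H) := by
        funext x
        simp [Function.comp, add_sub_cancel_right]
      rw [hcomp]
      exact base
    rwa [hmp.map_eq] at this
  have htailint_eq : ∫ x in Ioi (2*h), (x - h)^(-1-2*H) = h^(-(2*H))/(2*H) := by
    have heq := hmp.setIntegral_preimage_emb hemb (fun y => (y - h)^(-1-2*H)) (Ioi (2*h))
    rw [hpre] at heq
    simp only [add_sub_cancel_right] at heq
    rw [← heq, integral_Ioi_rpow_of_lt (by linarith) hh,
      show (-1-2*H) + 1 = -(2*H) by ring]
    exact neg_div_neg_eq _ _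
  have htail : ∫ x in Ioi (2*h), |Δ x| ≤ 16/α^2 * h^2 * (h^(-(2*H))/(2*H)) := by
    calc ∫ x in Ioi (2*h), |Δ x|
        ≤ ∫ x in Ioi (2*h), 16/α^2 * (x-h)^(-1-2*H) * h^2 := by
          refine setIntegral_mono_on hΔint.abs.integrableOn
            ((hint_tail.const_mul (16/α^2)).mul_const (h^2)) measurableSet_Ioi (fun x hx => ?_)
          exact FOUaux.key_bound ⟨hH0, hH1⟩ hα hh (le_of_lt hx)
      _ = 16/α^2 * h^2 * ∫ x in Ioi (2*h), (x-h)^(-1-2*H) := by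
          simp_rw [show ∀ x : ℝ, 16/α^2 * (x-h)^(-1-2*H) * h^2
            = (16/α^2 * h^2) * (x-h)^(-1-2*H) from fun x => by ring]
          rw [integral_const_mul]
      _ = 16/α^2 * h^2 * (h^(-(2*H))/(2*H)) := by rw [htailint_eq]
  -- arithmetic
  have hmulp : h * h^(1-2*H) = h^(2-2*H) := by
    rw [show (2-2*H) = 1 + (1-2*H) by ring, Real.rpow_add hh, Real.rpow_one]
  have e3h : h * (3*h)^(1-2*H) ≤ 3 * h^(2-2*H) := by
    have hm : (3*h)^(1-2*H) = 3^(1-2*H) * h^(1-2*H) := Real.mul_rpow (by norm_num) hh.le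
    have h3 : (3:ℝ)^(1-2*H) ≤ 3 := by
      calc (3:ℝ)^(1-2*H) ≤ (3:ℝ)^(1:ℝ) :=
        Real.rpow_le_rpow_of_exponent_le (by norm_num) (by linarith)
      _ = 3 := Real.rpow_one 3
    calc h * (3*h)^(1-2*H) = 3^(1-2*H) * (h * h^(1-2*H)) := by rw [hm]; ring
      _ ≤ 3 * (h * h^(1-2*H)) := by
          refine mul_le_mul_of_nonneg_right h3 ?_
          positivity
      _ = 3 * h^(2-2*H) := by rw [hmulp]
  have e2h : h^2 * h^(-(2*H)) = h^(2-2*H) := by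
    have hexp : ((2:ℕ):ℝ) + -(2*H) = 2-2*H := by push_cast; ring
    rw [show h^2 = h^((2:ℕ):ℝ) from (Real.rpow_natCast h 2).symm, ← Real.rpow_add hh, hexp]
  have eh : h^(2-2*H) ≤ π^2 * s^(2*H-2) := by
    have hd : (π/s)^(2-2*H) = π^(2-2*H) * s^(2*H-2) := by
      rw [Real.div_rpow Real.pi_pos.le hs0.le,
        show (2*H-2) = -(2-2*H) by ring, Real.rpow_neg hs0.le, div_eq_mul_inv]
    have hπ : π^(2-2*H) ≤ π^2 := by
      calc π^(2-2*H) ≤ π^((2:ℕ):ℝ) :=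
        Real.rpow_le_rpow_of_exponent_le (by linarith [Real.pi_gt_three]) (by push_cast; linarith)
      _ = π^2 := Real.rpow_natCast π 2
    rw [hh', hd]
    exact mul_le_mul_of_nonneg_right hπ (Real.rpow_nonneg hs0.le _)
  -- assemble
  have hX0 : (0:ℝ) ≤ h^(2-2*H) := Real.rpow_nonneg hh.le _
  have hs2 : (0:ℝ) ≤ s^(2*H-2) := Real.rpow_nonneg hs0.le _
  have hB1 : (4 * (3*h)^(1-2*H) / α^2) * (2*h) ≤ 24/α^2 * h^(2-2*H) := by
    have := mul_le_mul_of_nonneg_left e3h (show (0:ℝ) ≤ 8/α^2 by positivity)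
    calc (4 * (3*h)^(1-2*H) / α^2) * (2*h) = 8/α^2 * (h * (3*h)^(1-2*H)) := by ring
      _ ≤ 8/α^2 * (3 * h^(2-2*H)) := this
      _ = 24/α^2 * h^(2-2*H) := by ring
  have hB2 : 16/α^2 * h^2 * (h^(-(2*H))/(2*H)) = 8/(H*α^2) * h^(2-2*H) := by
    rw [show 16/α^2 * h^2 * (h^(-(2*H))/(2*H)) = 8/(H*α^2) * (h^2 * h^(-(2*H))) from by
      field_simp; ring, e2h]
  have hfinal : |c s| ≤ (12/α^2 + 4/(H*α^2)) * h^(2-2*H) := by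
    have hsum : ∫ x : ℝ, |Δ x| ≤ 2 * ((4 * (3*h)^(1-2*H) / α^2) * (2*h)
        + 16/α^2 * h^2 * (h^(-(2*H))/(2*H))) := by
      rw [hJ, hsplit3]
      linarith [hmid, htail]
    have h1 : 4 * |c s| ≤ 2 * (24/α^2 * h^(2-2*H) + 8/(H*α^2) * h^(2-2*H)) := by
      linarith [step2, hsum, hB1, hB2.le, hB2.ge]
    have h2 : 2 * (24/α^2 * h^(2-2*H) + 8/(H*α^2) * h^(2-2*H))
        = 4 * ((12/α^2 + 4/(H*α^2)) * h^(2-2*H)) := by ring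
    linarith
  calc |c s| ≤ (12/α^2 + 4/(H*α^2)) * h^(2-2*H) := hfinal
    _ ≤ (12/α^2 + 4/(H*α^2)) * (π^2 * s^(2*H-2)) := by
        refine mul_le_mul_of_nonneg_left eh ?_
        have : (0:ℝ) < 12/α^2 + 4/(H*α^2) :=
          add_pos (by positivity) (div_pos (by norm_num) (mul_pos hH0 (by positivity)))
        linarith
    _ = (12/α^2 + 4/(H*α^2)) * π^2 * s^(2*H-2) := by ring
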